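/- For two unit vectors a, b ∈ ℝ³, the operator norm of the matrix P₋(a)P₊(b) is bounded by a constant times the angle between a and b, where P±(ξ) = (1/2)(I ± ξ·α). Concretely: ‖P₋(a)P₊(b)‖ ≲ ∠(a,b). -/

import Mathlib

open Matrix Complex

noncomputable section

set_option maxHeartbeats 1000000
set_option synthInstance.maxHeartbeats 400000

def pauli : Fin 3 → Matrix (Fin 2) (Fin 2) ℂ :=
  ![!![0, 1; 1, 0], !![0, -I; I, 0], !![1, 0; 0, -1]]

def diracAlpha (j : Fin 3) : Matrix (Fin 2 ⊕ Fin 2) (Fin 2 ⊕ Fin 2) ℂ :=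
  Matrix.fromBlocks 0 (pauli j) (pauli j) 0

def diracBeta : Matrix (Fin 2 ⊕ Fin 2) (Fin 2 ⊕ Fin 2) ℂ :=
  Matrix.fromBlocks 1 0 0 (-1)

def diracDot (ξ : EuclideanSpace ℝ (Fin 3)) :
    Matrix (Fin 2 ⊕ Fin 2) (Fin 2 ⊕ Fin 2) ℂ :=
  ∑ j : Fin 3, (ξ j : ℂ) • diracAlpha j

def Pplus (ξ : EuclideanSpace ℝ (Fin 3)) :
    Matrix (Fin 2 ⊕ Fin 2) (Fin 2 ⊕ Fin 2) ℂ :=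
  ((1 : ℂ)/2) • (1 + diracDot ξ)

def Pminus (ξ : EuclideanSpace ℝ (Fin 3)) :
    Matrix (Fin 2 ⊕ Fin 2) (Fin 2 ⊕ Fin 2) ℂ :=
  ((1 : ℂ)/2) • (1 - diracDot ξ)

lemma pauli_conjT (j : Fin 3) : (pauli j)ᴴ = pauli j := by
  fin_cases j <;>
  · ext i k
    fin_cases i <;> fin_cases k <;> simp [pauli, Matrix.conjTranspose_apply]

lemma alpha_conjT (j : Fin 3) : (diracAlpha j)ᴴ = diracAlpha j := by
  simp [diracAlpha, Matrix.fromBlocks_conjTranspose, pauli_conjT]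

lemma alpha_mul_self (j : Fin 3) : diracAlpha j * diracAlpha j = 1 := by
  have h : pauli j * pauli j = 1 := by
    fin_cases j <;>
    · ext i k
      fin_cases i <;> fin_cases k <;>
        simp [pauli, Matrix.mul_apply, Fin.sum_univ_two, Matrix.one_apply] <;> ring_nf <;>
        simp [Complex.I_sq]
  simp [diracAlpha, Matrix.fromBlocks_multiply, h, ← Matrix.fromBlocks_one]

lemma pauliSum_sq (ξ : EuclideanSpace ℝ (Fin 3)) :
    (∑ j : Fin 3, (ξ j : ℂ) • pauli j) * (∑ j : Fin 3, (ξ j : ℂ) • pauli j) =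
      (((ξ 0)^2 + (ξ 1)^2 + (ξ 2)^2 : ℝ) : ℂ) • 1 := by
  ext i k
  fin_cases i <;> fin_cases k <;>
    simp [Fin.sum_univ_three, pauli, Matrix.mul_apply, Fin.sum_univ_two, Matrix.one_apply,
      Matrix.add_apply, Matrix.smul_apply] <;> push_cast <;> ring_nf <;> simp [Complex.I_sq] <;> ring

lemma diracDot_sq (ξ : EuclideanSpace ℝ (Fin 3)) :
    diracDot ξ * diracDot ξ = (((ξ 0)^2 + (ξ 1)^2 + (ξ 2)^2 : ℝ) : ℂ) • 1 := by
  have h : diracDot ξ = Matrix.fromBlocks 0 (∑ j : Fin 3, (ξ j : ℂ) • pauli j)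
      (∑ j : Fin 3, (ξ j : ℂ) • pauli j) 0 := by
    simp [diracDot, diracAlpha, Fin.sum_univ_three, Matrix.fromBlocks_smul,
      Matrix.fromBlocks_add]
  rw [h, Matrix.fromBlocks_multiply]
  simp only [Matrix.mul_zero, Matrix.zero_mul, add_zero, zero_add, pauliSum_sq]
  rw [← Matrix.fromBlocks_one, Matrix.fromBlocks_smul]
  simp

lemma sum_sq_eq_one (a : EuclideanSpace ℝ (Fin 3)) (ha : ‖a‖ = 1) :
    (a 0)^2 + (a 1)^2 + (a 2)^2 = 1 := by
  have h := EuclideanSpace.norm_eq a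
  rw [ha] at h
  have h2 : (1:ℝ) = Real.sqrt ((a 0)^2 + (a 1)^2 + (a 2)^2) := by
    rw [h]; congr 1; simp [Fin.sum_univ_three, Real.norm_eq_abs, sq_abs]
  have := Real.sqrt_eq_one.mp h2.symm
  linarith

lemma coord_abs_le_norm (x : EuclideanSpace ℝ (Fin 3)) (j : Fin 3) : |x j| ≤ ‖x‖ := by
  rw [EuclideanSpace.norm_eq]
  rw [show |x j| = Real.sqrt ((x j)^2) by rw [Real.sqrt_sq_eq_abs]]
  apply Real.sqrt_le_sqrt
  calc (x j)^2 = ‖x j‖^2 := by rw [Real.norm_eq_abs, _root_.sq_abs]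
    _ ≤ ∑ i, ‖x i‖^2 := Finset.single_le_sum (f := fun i => ‖x i‖^2)
        (fun i _ => sq_nonneg _) (Finset.mem_univ j)

lemma norm_T_alpha (j : Fin 3) :
    ‖Matrix.toEuclideanCLM (𝕜 := ℂ) (diracAlpha j)‖ = 1 := by
  set x := Matrix.toEuclideanCLM (𝕜 := ℂ) (diracAlpha j) with hx
  have hs : star x * x = 1 := by
    rw [hx, ← map_star, ← _root_.map_mul]
    rw [show star (diracAlpha j) = (diracAlpha j)ᴴ from rfl, alpha_conjT, alpha_mul_self, _root_.map_one]
  have h2 : ‖x‖ * ‖x‖ = 1 := by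
    rw [← CStarRing.norm_star_mul_self, hs, norm_one]
  rcases mul_self_eq_one_iff.mp h2 with h | h
  · exact h
  · nlinarith [norm_nonneg x]

lemma norm_T_sum_le (c : Fin 3 → ℝ) :
    ‖Matrix.toEuclideanCLM (𝕜 := ℂ) (∑ j : Fin 3, (c j : ℂ) • diracAlpha j)‖ ≤
      |c 0| + |c 1| + |c 2| := by
  have key : ∀ j, ‖Matrix.toEuclideanCLM (𝕜 := ℂ) ((c j : ℂ) • diracAlpha j)‖ = |c j| := by
    intro j
    rw [_root_.map_smul,
      norm_smul ((c j : ℂ)) (Matrix.toEuclideanCLM (𝕜 := ℂ) (diracAlpha j)),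
      norm_T_alpha, mul_one, Complex.norm_real, Real.norm_eq_abs]
  calc ‖Matrix.toEuclideanCLM (𝕜 := ℂ) (∑ j : Fin 3, (c j : ℂ) • diracAlpha j)‖
      = ‖∑ j : Fin 3, Matrix.toEuclideanCLM (𝕜 := ℂ) ((c j : ℂ) • diracAlpha j)‖ := by
        rw [map_sum]
    _ ≤ ∑ j : Fin 3, ‖Matrix.toEuclideanCLM (𝕜 := ℂ) ((c j : ℂ) • diracAlpha j)‖ :=
        norm_sum_le _ _
    _ = |c 0| + |c 1| + |c 2| := by rw [Fin.sum_univ_three, key 0, key 1, key 2]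

theorem Pminus_mul_Pplus_opNorm_le_angle :
    ∃ C : ℝ, 0 < C ∧ ∀ a b : EuclideanSpace ℝ (Fin 3), ‖a‖ = 1 → ‖b‖ = 1 →
      ‖Matrix.toEuclideanCLM (𝕜 := ℂ) (Pminus a * Pplus b)‖ ≤
        C * InnerProductGeometry.angle a b := by
  refine ⟨3, by norm_num, fun a b ha hb => ?_⟩
  set T := Matrix.toEuclideanCLM (n := Fin 2 ⊕ Fin 2) (𝕜 := ℂ)
  set θ := InnerProductGeometry.angle a b with hθ
  have hθ0 : 0 ≤ θ := InnerProductGeometry.angle_nonneg a b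
  -- Pminus a * Pplus a = 0
  have hzero : Pminus a * Pplus a = 0 := by
    unfold Pminus Pplus
    rw [Matrix.smul_mul, Matrix.mul_smul, sub_mul, mul_add, mul_add, one_mul, mul_one,
      diracDot_sq, sum_sq_eq_one a ha]
    simp
    abel
  -- splitting
  have hsplit : Pminus a * Pplus b = Pminus a * (Pplus b - Pplus a) := by
    rw [mul_sub, hzero, sub_zero]
  -- bound on Pminus a
  have hPm : ‖T (Pminus a)‖ ≤ 2 := by
    unfold Pminus
    rw [_root_.map_smul, _root_.map_sub, _root_.map_one]
    rw [norm_smul ((1:ℂ)/2) (1 - T (diracDot a))]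
    have h1 : ‖(1:ℂ)/2‖ = 1/2 := by norm_num
    have h2 : ‖(1 : EuclideanSpace ℂ (Fin 2 ⊕ Fin 2) →L[ℂ] EuclideanSpace ℂ (Fin 2 ⊕ Fin 2)) -
        T (diracDot a)‖ ≤ 1 + 3 := by
      refine le_trans (norm_sub_le _ _) (add_le_add (le_of_eq norm_one) ?_)
      refine le_trans (norm_T_sum_le (fun j => a j)) ?_
      have h := fun j => le_trans (coord_abs_le_norm a j) (le_of_eq ha)
      linarith [h 0, h 1, h 2]
    calc ‖(1:ℂ)/2‖ * ‖_ - T (diracDot a)‖ ≤ (1/2) * (1+3) := by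
          rw [h1]; exact mul_le_mul_of_nonneg_left h2 (by norm_num)
      _ = 2 := by norm_num
  -- difference bound
  have hdiff : ‖T (Pplus b) - T (Pplus a)‖ ≤ (3/2) * ‖b - a‖ := by
    have he : Pplus b - Pplus a = ((1:ℂ)/2) • (∑ j : Fin 3, (((b - a) j : ℝ) : ℂ) • diracAlpha j) := by
      unfold Pplus
      rw [← smul_sub]
      congr 1
      rw [add_sub_add_left_eq_sub]
      unfold diracDot
      rw [← Finset.sum_sub_distrib]
      refine Finset.sum_congr rfl fun j _ => ?_
      rw [← sub_smul]
      congr 1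
      push_cast [PiLp.sub_apply]
      ring
    rw [← _root_.map_sub, he, _root_.map_smul]
    rw [norm_smul ((1:ℂ)/2) (T (∑ j : Fin 3, (((b - a) j : ℝ) : ℂ) • diracAlpha j))]
    have h1 : ‖(1:ℂ)/2‖ = 1/2 := by norm_num
    rw [h1]
    have h2 := norm_T_sum_le (fun j => (b - a) j)
    have h3 : ∀ j : Fin 3, |(b - a) j| ≤ ‖b - a‖ := fun j => coord_abs_le_norm (b - a) j
    calc (1/2) * ‖T (∑ j : Fin 3, (((b - a) j : ℝ) : ℂ) • diracAlpha j)‖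
        ≤ (1/2) * (|(b-a) 0| + |(b-a) 1| + |(b-a) 2|) := by
          apply mul_le_mul_of_nonneg_left h2 (by norm_num)
      _ ≤ (3/2) * ‖b - a‖ := by linarith [h3 0, h3 1, h3 2]
  -- angle bound : ‖b - a‖ ≤ θ
  have hang : ‖b - a‖ ≤ θ := by
    have hcos : Real.cos θ = inner ℝ a b := by
      rw [hθ, InnerProductGeometry.cos_angle, ha, hb]
      simp
    have hns : ‖b - a‖^2 = 2 - 2 * Real.cos θ := by
      rw [hcos]
      rw [norm_sub_sq_real, ha, hb, real_inner_comm]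
      ring
    have hle : Real.cos θ ≥ 1 - θ^2/2 := Real.one_sub_sq_div_two_le_cos
    have : ‖b - a‖^2 ≤ θ^2 := by rw [hns]; linarith
    nlinarith [norm_nonneg (b - a)]
  -- assemble
  rw [hsplit, _root_.map_mul]
  calc ‖T (Pminus a) * T (Pplus b - Pplus a)‖ ≤ ‖T (Pminus a)‖ * ‖T (Pplus b - Pplus a)‖ :=
        norm_mul_le _ _
    _ ≤ 2 * ((3/2) * ‖b - a‖) := by
        rw [_root_.map_sub]
        refine mul_le_mul hPm hdiff (norm_nonneg _) (by norm_num)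
    _ = 3 * ‖b - a‖ := by ring
    _ ≤ 3 * θ := by linarith
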